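/- Under the stated conditions, assume additionally that log(p/p₀) is P₀-integrable and set m := ∫ log(p/p₀) dP₀. Then ‖(1/4)(log(p/p₀) − m)‖²_{P₀,B} ≤ (2 + M) · h(p,p₀)². -/

import Mathlib

open MeasureTheory Real ENNReal

private lemma aux_sqrt_le_one_add {t : ℝ} (ht : 0 ≤ t) : Real.sqrt t ≤ 1 + t := by
  nlinarith [Real.sq_sqrt ht, Real.sqrt_nonneg t, sq_nonneg (Real.sqrt t - 1)]

private lemma aux_phi_abs_le (x : ℝ) :
    Real.exp |x| - 1 - |x| ≤ Real.exp x + Real.exp (-x) - 2 := by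
  rcases abs_cases x with ⟨h1, _⟩ | ⟨h1, _⟩ <;> rw [h1] <;>
    nlinarith [Real.add_one_le_exp (-x), Real.add_one_le_exp x]

private lemma aux_conv_bound {a b y : ℝ} (hy : 0 < y) (hya : y ≤ a) (hby : 1 ≤ b * y) :
    a * y⁻¹ + b * y ≤ 1 + a * b := by
  have h : 0 ≤ (a - y) * (b * y - 1) := mul_nonneg (by linarith) (by linarith)
  have hkey : a + b * y ^ 2 ≤ (1 + a * b) * y := by nlinarith
  have h2 : a * y⁻¹ + b * y = (a + b * y ^ 2) * y⁻¹ := by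
    field_simp
  rw [h2]
  calc (a + b * y ^ 2) * y⁻¹ ≤ ((1 + a * b) * y) * y⁻¹ := by
        apply mul_le_mul_of_nonneg_right hkey
        positivity
    _ = 1 + a * b := by field_simp

private lemma aux_inv_bound {a b s K : ℝ} (ha : 0 < a) (hb : 0 < b) (hsK : s * K = 1)
    (hs : 0 ≤ s) (h : K ≤ b / a) : a / b ≤ s := by
  have h' : K * a ≤ b := by
    rw [le_div_iff₀ ha] at h; linarith
  rw [div_le_iff₀ hb]
  nlinarith [mul_le_mul_of_nonneg_left h' hs]

private lemma aux_pt_upper {a b t : ℝ} (ha : 0 < a) (hb : 0 < b)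
    (hsv : Real.sqrt (b / a) ≤ t) :
    Real.sqrt (a / b) + Real.sqrt (b / a) - 2 ≤ t * (1 - Real.sqrt (a / b)) ^ 2 := by
  have h1 : Real.sqrt (b / a) * Real.sqrt (a / b) = 1 := by
    rw [← Real.sqrt_mul (by positivity)]
    rw [show b / a * (a / b) = 1 by field_simp]
    exact Real.sqrt_one
  have h2 : Real.sqrt (b / a) * (1 - Real.sqrt (a / b)) ^ 2
      = Real.sqrt (b / a) - 2 * (Real.sqrt (b / a) * Real.sqrt (a / b))
        + (Real.sqrt (b / a) * Real.sqrt (a / b)) * Real.sqrt (a / b) := by ring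
  rw [h1] at h2
  have h3 : Real.sqrt (b / a) * (1 - Real.sqrt (a / b)) ^ 2
      ≤ t * (1 - Real.sqrt (a / b)) ^ 2 :=
    mul_le_mul_of_nonneg_right hsv (sq_nonneg _)
  linarith

private lemma aux_pt_A2 {a b θ : ℝ} (ha : 0 < a) (hb : 0 < b) (hθ : 2 ≤ θ)
    (hv : θ ^ 2 ≤ b / a) :
    θ * (Real.sqrt (a / b) + Real.sqrt (b / a) - 2) ≤ b / a := by
  have hba1 : 1 ≤ b / a := le_trans (by nlinarith) hv
  have hab1 : a / b ≤ 1 := by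
    rw [div_le_one hb]
    rw [le_div_iff₀ ha] at hba1; linarith
  have hw : Real.sqrt (a / b) ≤ 1 := by
    rw [show (1 : ℝ) = Real.sqrt 1 from Real.sqrt_one.symm]
    exact Real.sqrt_le_sqrt hab1
  have hsv : θ ≤ Real.sqrt (b / a) := by
    calc θ = Real.sqrt (θ ^ 2) := (Real.sqrt_sq (by linarith)).symm
      _ ≤ Real.sqrt (b / a) := Real.sqrt_le_sqrt hv
  have hsq : (Real.sqrt (b / a)) ^ 2 = b / a := Real.sq_sqrt (by positivity)
  nlinarith [Real.sqrt_nonneg (a / b), Real.sqrt_nonneg (b / a),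
    mul_nonneg (sub_nonneg.2 hsv) (show (0:ℝ) ≤ Real.sqrt (b / a) - 1 by linarith)]

private lemma aux_pt_cheb {a b c : ℝ} (ha : 0 < a) (hb : 0 < b) (hc : 1 ≤ c)
    (hv : (1 + 1 / (2 * c)) ^ 2 ≤ b / a) :
    1 ≤ (2 * c + 1) ^ 2 * (1 - Real.sqrt (a / b)) ^ 2 := by
  have hc0 : (0:ℝ) < c := by linarith
  have h2c : (2 * c) ≠ 0 := by positivity
  have h2c1 : (2 * c + 1) ≠ 0 := by positivity
  have hκ : (1 + 1 / (2 * c)) ^ 2 = ((2 * c + 1) / (2 * c)) ^ 2 := by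
    field_simp
  rw [hκ] at hv
  have h1 : a / b ≤ (2 * c / (2 * c + 1)) ^ 2 := by
    refine aux_inv_bound ha hb ?_ (by positivity) hv
    field_simp
  have hw : Real.sqrt (a / b) ≤ 2 * c / (2 * c + 1) := by
    calc Real.sqrt (a / b) ≤ Real.sqrt ((2 * c / (2 * c + 1)) ^ 2) := Real.sqrt_le_sqrt h1
      _ = 2 * c / (2 * c + 1) := Real.sqrt_sq (by positivity)
  have hlin : 1 ≤ (2 * c + 1) * (1 - Real.sqrt (a / b)) := by
    rw [le_div_iff₀ (by positivity : (0:ℝ) < 2 * c + 1)] at hw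
    nlinarith
  nlinarith [hlin, sq_nonneg ((2 * c + 1) * (1 - Real.sqrt (a / b)) - 1)]


private lemma aux_pt_cheb2 {a b Mv : ℝ} (ha : 0 < a) (hb : 0 < b) (hMv : 0 ≤ Mv)
    (hv : (2 + Mv) ^ 2 ≤ b / a) :
    (1 + Mv) ^ 2 ≤ (2 + Mv) ^ 2 * (1 - Real.sqrt (a / b)) ^ 2 := by
  have hθ0 : (0:ℝ) < 2 + Mv := by linarith
  have h1 : a / b ≤ (1 / (2 + Mv)) ^ 2 := by
    refine aux_inv_bound ha hb ?_ (by positivity) hv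
    field_simp
  have hw : Real.sqrt (a / b) ≤ 1 / (2 + Mv) := by
    calc Real.sqrt (a / b) ≤ Real.sqrt ((1 / (2 + Mv)) ^ 2) := Real.sqrt_le_sqrt h1
      _ = 1 / (2 + Mv) := Real.sqrt_sq (by positivity)
  have hlin : 1 + Mv ≤ (2 + Mv) * (1 - Real.sqrt (a / b)) := by
    rw [le_div_iff₀ hθ0] at hw
    nlinarith
  nlinarith [hlin, Real.sqrt_nonneg (a / b),
    mul_nonneg (sub_nonneg.2 hlin) (show (0:ℝ) ≤ (2 + Mv) * (1 - Real.sqrt (a / b)) + (1 + Mv) by nlinarith)]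

private lemma aux_key1 {c M : ℝ} (hc : 1 ≤ c) (hcM : c * (1 + 1 / (2 * c)) ^ 2 ≤ M) :
    (M - c * (1 + 1 / (2 * c)) ^ 2) * (2 * c + 1) ^ 2 ≤ c * (2 + M) ^ 2 := by
  have hc0 : (0:ℝ) < c := by linarith
  have h4 : 4 * c * (c * (1 + 1 / (2 * c)) ^ 2) = (2 * c + 1) ^ 2 := by
    field_simp; ring
  have hP : 0 ≤ 4 * c * M - (2 * c + 1) ^ 2 := by nlinarith
  have h40 : (0:ℝ) < 4 * c := by linarith
  rw [← mul_le_mul_iff_right₀ h40]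
  calc 4 * c * ((M - c * (1 + 1 / (2 * c)) ^ 2) * (2 * c + 1) ^ 2)
      = (4 * c * M - 4 * c * (c * (1 + 1 / (2 * c)) ^ 2)) * (2 * c + 1) ^ 2 := by ring
    _ = (4 * c * M - (2 * c + 1) ^ 2) * (2 * c + 1) ^ 2 := by rw [h4]
    _ ≤ 4 * c ^ 2 * (2 + M) ^ 2 := by
        nlinarith [sq_nonneg (8 * c + (2 * c + 1) ^ 2 - (4 * c * M - (2 * c + 1) ^ 2)),
          mul_nonneg (show (0:ℝ) ≤ 32 * c by linarith) hP]
    _ = 4 * c * (c * (2 + M) ^ 2) := by ring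

private lemma aux_key2 {c M : ℝ} (hc : 1 ≤ c) (hM : 0 ≤ M) :
    M * (2 + M) ^ 2 ≤ c * ((4 + 2 * M) * (2 + M) * (1 + M) ^ 2) := by
  have base : M * (2 + M) ^ 2 ≤ (4 + 2 * M) * (2 + M) * (1 + M) ^ 2 := by nlinarith [sq_nonneg M]
  have hRnn : 0 ≤ (4 + 2 * M) * (2 + M) * (1 + M) ^ 2 := by positivity
  calc M * (2 + M) ^ 2 ≤ (4 + 2 * M) * (2 + M) * (1 + M) ^ 2 := base
    _ ≤ c * ((4 + 2 * M) * (2 + M) * (1 + M) ^ 2) := le_mul_of_one_le_left hRnn hc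

private lemma aux_integral_pos {X : Type*} [MeasurableSpace X] {P : Measure X}
    [IsProbabilityMeasure P] {h : X → ℝ} (ih : Integrable h P)
    (hnn : ∀ x, 0 ≤ h x) (hpos : ∀ᵐ x ∂P, 0 < h x) : 0 < ∫ x, h x ∂P := by
  rw [integral_pos_iff_support_of_nonneg_ae (Filter.Eventually.of_forall hnn) ih]
  have hae : ∀ᵐ x ∂P, x ∈ Function.support h := by
    filter_upwards [hpos] with x hx
    exact ne_of_gt hx
  have h0 : P {x | ¬ x ∈ Function.support h} = 0 := ae_iff.mp hae
  have h0' : P (Function.support h)ᶜ = 0 := h0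
  by_contra hcon
  push_neg at hcon
  have hz : P (Function.support h) = 0 := le_antisymm (by simpa using hcon) (by positivity)
  have h1 : P Set.univ ≤ P (Function.support h) + P (Function.support h)ᶜ := by
    conv_lhs => rw [← Set.union_compl_self (Function.support h)]
    exact measure_union_le _ _
  rw [measure_univ, hz, h0'] at h1
  simp at h1

private lemma aux_jensen {X : Type*} [MeasurableSpace X] {P : Measure X}
    [IsProbabilityMeasure P] {h : X → ℝ} (ih : Integrable h P) (hnn : ∀ x, 0 ≤ h x)
    (hpos : ∀ᵐ x ∂P, 0 < h x) (ilog : Integrable (fun x => Real.log (h x)) P) :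
    ∫ x, Real.log (h x) ∂P ≤ Real.log (∫ x, h x ∂P) := by
  have hrpos : 0 < ∫ x, h x ∂P := aux_integral_pos ih hnn hpos
  have hrne : (∫ x, h x ∂P) ≠ 0 := ne_of_gt hrpos
  have hkey : ∀ᵐ x ∂P, Real.log (h x)
      ≤ Real.log (∫ x, h x ∂P) + (h x / (∫ x, h x ∂P) - 1) := by
    filter_upwards [hpos] with x hx
    have hlog : Real.log (h x / ∫ x, h x ∂P) ≤ h x / (∫ x, h x ∂P) - 1 :=
      Real.log_le_sub_one_of_pos (div_pos hx hrpos)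
    rw [Real.log_div (ne_of_gt hx) hrne] at hlog
    linarith
  have i1 : Integrable (fun x => h x / (∫ x, h x ∂P) - 1) P := by
    exact (ih.div_const _).sub (integrable_const 1)
  have hInt2 : Integrable (fun x => Real.log (∫ x, h x ∂P) + (h x / (∫ x, h x ∂P) - 1)) P := by
    exact (integrable_const _).add i1
  have hstep := integral_mono_ae ilog hInt2 hkey
  rw [integral_add (integrable_const _) i1,
    integral_sub (ih.div_const _) (integrable_const 1), integral_div, integral_const,
    integral_const, div_self hrne] at hstep
  simp [measure_univ] at hstep
  linarith

set_option maxHeartbeats 2000000 in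
theorem bernstein_norm_quarter_centered_log_ratio_le_hellinger
    {X : Type*} [MeasurableSpace X] (μ : Measure X) [SigmaFinite μ]
    (p p₀ : X → ℝ) (hp : Measurable p) (hp₀ : Measurable p₀)
    (hpnn : ∀ x, 0 ≤ p x) (hp₀nn : ∀ x, 0 ≤ p₀ x)
    (hpden : ∫⁻ x, ENNReal.ofReal (p x) ∂μ = 1)
    (hp₀den : ∫⁻ x, ENNReal.ofReal (p₀ x) ∂μ = 1)
    (P₀ : Measure X) (hP₀ : P₀ = μ.withDensity fun x => ENNReal.ofReal (p₀ x))
    (hzero : P₀ {x | p x = 0} = 0)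
    (hfin : ∫⁻ x, ENNReal.ofReal (p₀ x / p x) ∂P₀ < ⊤)
    (M : ℝ) (hM : 0 ≤ M)
    (hMbound : ∃ c : ℝ, 1 ≤ c ∧
      (P₀ {x | (1 + 1 / (2 * c)) ^ 2 ≤ p₀ x / p x} = 0 ∨
        ENNReal.ofReal c *
            (∫⁻ x in {x | (1 + 1 / (2 * c)) ^ 2 ≤ p₀ x / p x},
              ENNReal.ofReal (p₀ x / p x) ∂P₀) ≤
          ENNReal.ofReal M * P₀ {x | (1 + 1 / (2 * c)) ^ 2 ≤ p₀ x / p x}))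
    (hint : Integrable (fun x => Real.log (p x / p₀ x)) P₀)
    (m : ℝ) (hm : m = ∫ x, Real.log (p x / p₀ x) ∂P₀) :
    2 * ∫⁻ x, ENNReal.ofReal
          (Real.exp |1 / 4 * (Real.log (p x / p₀ x) - m)| - 1 -
            |1 / 4 * (Real.log (p x / p₀ x) - m)|) ∂P₀ ≤
      ENNReal.ofReal (2 + M) *
        ∫⁻ x, ENNReal.ofReal ((Real.sqrt (p x) - Real.sqrt (p₀ x)) ^ 2) ∂μ := by
  obtain ⟨c, hc, hMc⟩ := hMbound
  have hc0 : (0:ℝ) < c := by linarith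
  have hθ0 : (0:ℝ) < 2 + M := by linarith
  haveI hPP : IsProbabilityMeasure P₀ := by
    constructor
    rw [hP₀, withDensity_apply _ MeasurableSet.univ, Measure.restrict_univ]
    exact hp₀den
  -- a.e. positivity
  have hppos : ∀ᵐ x ∂P₀, 0 < p x := by
    have h1 : ∀ᵐ x ∂P₀, ¬ p x = 0 := by
      rw [ae_iff]; simpa using hzero
    filter_upwards [h1] with x hx
    exact lt_of_le_of_ne (hpnn x) (Ne.symm hx)
  have hp0pos : ∀ᵐ x ∂P₀, 0 < p₀ x := by
    have hz0 : P₀ {x | p₀ x = 0} = 0 := by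
      have hms : MeasurableSet {x | p₀ x = 0} := by exact hp₀ (measurableSet_singleton 0)
      rw [hP₀, withDensity_apply _ hms]
      have h0 : ∫⁻ x in {x | p₀ x = 0}, ENNReal.ofReal (p₀ x) ∂μ
          = ∫⁻ _x in {x | p₀ x = 0}, (0:ℝ≥0∞) ∂μ :=
        setLIntegral_congr_fun hms (fun x hx => by
          simp only [Set.mem_setOf_eq] at hx
          simp [hx])
      rw [h0]
      simp
    have h1 : ∀ᵐ x ∂P₀, ¬ p₀ x = 0 := by
      rw [ae_iff]; simpa using hz0
    filter_upwards [h1] with x hx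
    exact lt_of_le_of_ne (hp₀nn x) (Ne.symm hx)
  have hpos : ∀ᵐ x ∂P₀, 0 < p x ∧ 0 < p₀ x := hppos.and hp0pos
  -- measurability
  have hmu : Measurable fun x => p x / p₀ x := hp.div hp₀
  have hmv : Measurable fun x => p₀ x / p x := hp₀.div hp
  have hmw : Measurable fun x => Real.sqrt (p x / p₀ x) := hmu.sqrt
  have hmsv : Measurable fun x => Real.sqrt (p₀ x / p x) := hmv.sqrt
  have hmu4 : Measurable fun x => Real.sqrt (Real.sqrt (p x / p₀ x)) := hmw.sqrt
  have hmv4 : Measurable fun x => Real.sqrt (Real.sqrt (p₀ x / p x)) := hmsv.sqrt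
  have hmw1 : Measurable fun x => (1 - Real.sqrt (p x / p₀ x)) ^ 2 :=
    (measurable_const.sub hmw).pow_const 2
  have hmf : Measurable fun x => 1 / 4 * (Real.log (p x / p₀ x) - m) :=
    (hmu.log.sub measurable_const).const_mul _
  -- integrability over P₀
  have hvnn : ∀ x, 0 ≤ p₀ x / p x := fun x => div_nonneg (hp₀nn x) (hpnn x)
  have hunn : ∀ x, 0 ≤ p x / p₀ x := fun x => div_nonneg (hpnn x) (hp₀nn x)
  have int_v : Integrable (fun x => p₀ x / p x) P₀ := by
    refine ⟨hmv.aestronglyMeasurable, ?_⟩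
    rw [hasFiniteIntegral_iff_ofReal (Filter.Eventually.of_forall hvnn)]
    exact hfin
  have hu_lint : ∫⁻ x, ENNReal.ofReal (p x / p₀ x) ∂P₀ ≤ 1 := by
    rw [hP₀, lintegral_withDensity_eq_lintegral_mul μ hp₀.ennreal_ofReal hmu.ennreal_ofReal]
    calc ∫⁻ x, ((fun x => ENNReal.ofReal (p₀ x)) * fun x => ENNReal.ofReal (p x / p₀ x)) x ∂μ
        ≤ ∫⁻ x, ENNReal.ofReal (p x) ∂μ := by
          refine lintegral_mono fun x => ?_
          simp only [Pi.mul_apply]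
          rcases (hp₀nn x).eq_or_lt with h0 | h0
          · simp [← h0]
          · rw [← ENNReal.ofReal_mul (hp₀nn x)]
            apply ENNReal.ofReal_le_ofReal
            rw [mul_comm, div_mul_cancel₀ _ (ne_of_gt h0)]
      _ = 1 := hpden
  have int_u : Integrable (fun x => p x / p₀ x) P₀ := by
    refine ⟨hmu.aestronglyMeasurable, ?_⟩
    rw [hasFiniteIntegral_iff_ofReal (Filter.Eventually.of_forall hunn)]
    exact lt_of_le_of_lt hu_lint ENNReal.one_lt_top
  have int_w : Integrable (fun x => Real.sqrt (p x / p₀ x)) P₀ := by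
    have imaj : Integrable (fun x => 1 + p x / p₀ x) P₀ := by
      exact (integrable_const 1).add int_u
    refine imaj.mono' hmw.aestronglyMeasurable (Filter.Eventually.of_forall fun x => ?_)
    rw [Real.norm_eq_abs, abs_of_nonneg (Real.sqrt_nonneg _)]
    exact aux_sqrt_le_one_add (hunn x)
  have int_sv : Integrable (fun x => Real.sqrt (p₀ x / p x)) P₀ := by
    have imaj : Integrable (fun x => 1 + p₀ x / p x) P₀ := by
      exact (integrable_const 1).add int_v
    refine imaj.mono' hmsv.aestronglyMeasurable (Filter.Eventually.of_forall fun x => ?_)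
    rw [Real.norm_eq_abs, abs_of_nonneg (Real.sqrt_nonneg _)]
    exact aux_sqrt_le_one_add (hvnn x)
  have int_u4 : Integrable (fun x => Real.sqrt (Real.sqrt (p x / p₀ x))) P₀ := by
    have imaj : Integrable (fun x => 1 + Real.sqrt (p x / p₀ x)) P₀ := by
      exact (integrable_const 1).add int_w
    refine imaj.mono' hmu4.aestronglyMeasurable (Filter.Eventually.of_forall fun x => ?_)
    rw [Real.norm_eq_abs, abs_of_nonneg (Real.sqrt_nonneg _)]
    exact aux_sqrt_le_one_add (Real.sqrt_nonneg _)
  have int_v4 : Integrable (fun x => Real.sqrt (Real.sqrt (p₀ x / p x))) P₀ := by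
    have imaj : Integrable (fun x => 1 + Real.sqrt (p₀ x / p x)) P₀ := by
      exact (integrable_const 1).add int_sv
    refine imaj.mono' hmv4.aestronglyMeasurable (Filter.Eventually.of_forall fun x => ?_)
    rw [Real.norm_eq_abs, abs_of_nonneg (Real.sqrt_nonneg _)]
    exact aux_sqrt_le_one_add (Real.sqrt_nonneg _)
  have int_g : Integrable (fun x => Real.sqrt (p x / p₀ x) + Real.sqrt (p₀ x / p x) - 2) P₀ := by
    exact (int_w.add int_sv).sub (integrable_const 2)
  have int_w1 : Integrable (fun x => (1 - Real.sqrt (p x / p₀ x)) ^ 2) P₀ := by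
    have imaj : Integrable (fun x => 3 + 3 * (p x / p₀ x)) P₀ := by
      exact (integrable_const 3).add (int_u.const_mul 3)
    refine imaj.mono' hmw1.aestronglyMeasurable (Filter.Eventually.of_forall fun x => ?_)
    rw [Real.norm_eq_abs, abs_of_nonneg (sq_nonneg _)]
    nlinarith [Real.sq_sqrt (hunn x), Real.sqrt_nonneg (p x / p₀ x), sq_nonneg (Real.sqrt (p x / p₀ x) - 1)]
  have int_q : Integrable (fun x => (Real.sqrt (Real.sqrt (p x / p₀ x)) + Real.sqrt (Real.sqrt (p₀ x / p x))) / 2) P₀ := by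
    exact (int_u4.add int_v4).div_const 2
  have int_q2 : Integrable (fun x => ((Real.sqrt (Real.sqrt (p x / p₀ x)) + Real.sqrt (Real.sqrt (p₀ x / p x))) / 2) ^ 2) P₀ := by
    have imaj : Integrable (fun x => Real.sqrt (p x / p₀ x) + Real.sqrt (p₀ x / p x)) P₀ := by
      exact int_w.add int_sv
    refine imaj.mono' (((hmu4.add hmv4).div_const 2).pow_const 2).aestronglyMeasurable
      (Filter.Eventually.of_forall fun x => ?_)
    rw [Real.norm_eq_abs, abs_of_nonneg (sq_nonneg _)]
    nlinarith [Real.sq_sqrt (Real.sqrt_nonneg (p x / p₀ x)), Real.sq_sqrt (Real.sqrt_nonneg (p₀ x / p x)),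
      sq_nonneg (Real.sqrt (Real.sqrt (p x / p₀ x)) - Real.sqrt (Real.sqrt (p₀ x / p x))),
      Real.sqrt_nonneg (Real.sqrt (p x / p₀ x)), Real.sqrt_nonneg (Real.sqrt (p₀ x / p x))]
  -- exp identities
  have ef_eq : (fun x => Real.exp (1 / 4 * (Real.log (p x / p₀ x) - m))) =ᵐ[P₀]
      (fun x => Real.sqrt (Real.sqrt (p x / p₀ x)) * Real.exp (-(m / 4))) := by
    filter_upwards [hpos] with x hx
    have hux : 0 < p x / p₀ x := div_pos hx.1 hx.2
    have h4 : Real.log (Real.sqrt (Real.sqrt (p x / p₀ x))) = 1 / 4 * Real.log (p x / p₀ x) := by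
      rw [Real.log_sqrt (Real.sqrt_nonneg _), Real.log_sqrt hux.le]; ring
    have hfx : 1 / 4 * (Real.log (p x / p₀ x) - m)
        = Real.log (Real.sqrt (Real.sqrt (p x / p₀ x))) + (-(m / 4)) := by rw [h4]; ring
    rw [hfx, Real.exp_add, Real.exp_log (Real.sqrt_pos.2 (Real.sqrt_pos.2 hux))]
  have emf_eq : (fun x => Real.exp (-(1 / 4 * (Real.log (p x / p₀ x) - m)))) =ᵐ[P₀]
      (fun x => Real.sqrt (Real.sqrt (p₀ x / p x)) * Real.exp (m / 4)) := by
    filter_upwards [hpos] with x hx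
    have hvx : 0 < p₀ x / p x := div_pos hx.2 hx.1
    have hinv : p₀ x / p x = (p x / p₀ x)⁻¹ := by rw [inv_div]
    have h4 : Real.log (Real.sqrt (Real.sqrt (p₀ x / p x))) = -(1 / 4) * Real.log (p x / p₀ x) := by
      rw [Real.log_sqrt (Real.sqrt_nonneg _), Real.log_sqrt hvx.le, hinv, Real.log_inv]; ring
    have hfx : -(1 / 4 * (Real.log (p x / p₀ x) - m))
        = Real.log (Real.sqrt (Real.sqrt (p₀ x / p x))) + m / 4 := by rw [h4]; ring
    rw [hfx, Real.exp_add, Real.exp_log (Real.sqrt_pos.2 (Real.sqrt_pos.2 hvx))]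
  have int_ef : Integrable (fun x => Real.exp (1 / 4 * (Real.log (p x / p₀ x) - m))) P₀ :=
    (int_u4.mul_const _).congr ef_eq.symm
  have int_emf : Integrable (fun x => Real.exp (-(1 / 4 * (Real.log (p x / p₀ x) - m)))) P₀ :=
    (int_v4.mul_const _).congr emf_eq.symm
  have int_F : Integrable (fun x => Real.exp |1 / 4 * (Real.log (p x / p₀ x) - m)| - 1 -
      |1 / 4 * (Real.log (p x / p₀ x) - m)|) P₀ := by
    have imaj : Integrable (fun x => Real.exp (1 / 4 * (Real.log (p x / p₀ x) - m)) +
        Real.exp (-(1 / 4 * (Real.log (p x / p₀ x) - m)))) P₀ := by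
      exact int_ef.add int_emf
    refine imaj.mono' ((((hmf.abs.exp).sub measurable_const).sub hmf.abs).aestronglyMeasurable)
      (Filter.Eventually.of_forall fun x => ?_)
    have hnn : (0:ℝ) ≤ Real.exp |1 / 4 * (Real.log (p x / p₀ x) - m)| - 1 -
        |1 / 4 * (Real.log (p x / p₀ x) - m)| := by
      nlinarith [Real.add_one_le_exp (|1 / 4 * (Real.log (p x / p₀ x) - m)|)]
    rw [Real.norm_eq_abs, abs_of_nonneg hnn]
    have h1 := aux_phi_abs_le (1 / 4 * (Real.log (p x / p₀ x) - m))
    linarith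
  -- Jensen bounds
  have ha0 : 0 < ∫ x, Real.sqrt (Real.sqrt (p x / p₀ x)) ∂P₀ := by
    refine aux_integral_pos int_u4 (fun x => Real.sqrt_nonneg _) ?_
    filter_upwards [hpos] with x hx
    exact Real.sqrt_pos.2 (Real.sqrt_pos.2 (div_pos hx.1 hx.2))
  have hb0 : 0 < ∫ x, Real.sqrt (Real.sqrt (p₀ x / p x)) ∂P₀ := by
    refine aux_integral_pos int_v4 (fun x => Real.sqrt_nonneg _) ?_
    filter_upwards [hpos] with x hx
    exact Real.sqrt_pos.2 (Real.sqrt_pos.2 (div_pos hx.2 hx.1))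
  have hlogu4_eq : (fun x => Real.log (Real.sqrt (Real.sqrt (p x / p₀ x)))) =ᵐ[P₀]
      (fun x => 1 / 4 * Real.log (p x / p₀ x)) := by
    filter_upwards [hpos] with x hx
    have hux : 0 < p x / p₀ x := div_pos hx.1 hx.2
    rw [Real.log_sqrt (Real.sqrt_nonneg _), Real.log_sqrt hux.le]; ring
  have hlogv4_eq : (fun x => Real.log (Real.sqrt (Real.sqrt (p₀ x / p x)))) =ᵐ[P₀]
      (fun x => -(1 / 4) * Real.log (p x / p₀ x)) := by
    filter_upwards [hpos] with x hx
    have hvx : 0 < p₀ x / p x := div_pos hx.2 hx.1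
    have hinv : p₀ x / p x = (p x / p₀ x)⁻¹ := by rw [inv_div]
    rw [Real.log_sqrt (Real.sqrt_nonneg _), Real.log_sqrt hvx.le, hinv, Real.log_inv]; ring
  have int_logu4 : Integrable (fun x => Real.log (Real.sqrt (Real.sqrt (p x / p₀ x)))) P₀ :=
    (hint.const_mul (1 / 4)).congr hlogu4_eq.symm
  have int_logv4 : Integrable (fun x => Real.log (Real.sqrt (Real.sqrt (p₀ x / p x)))) P₀ :=
    (hint.const_mul (-(1 / 4))).congr hlogv4_eq.symm
  have hju : ∫ x, Real.log (Real.sqrt (Real.sqrt (p x / p₀ x))) ∂P₀ = m / 4 := by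
    rw [integral_congr_ae hlogu4_eq, integral_const_mul, ← hm]; ring
  have hjv : ∫ x, Real.log (Real.sqrt (Real.sqrt (p₀ x / p x))) ∂P₀ = -(m / 4) := by
    rw [integral_congr_ae hlogv4_eq, integral_const_mul, ← hm]; ring
  have hea : Real.exp (m / 4) ≤ ∫ x, Real.sqrt (Real.sqrt (p x / p₀ x)) ∂P₀ := by
    have hj := aux_jensen int_u4 (fun x => Real.sqrt_nonneg _) (by
      filter_upwards [hpos] with x hx
      exact Real.sqrt_pos.2 (Real.sqrt_pos.2 (div_pos hx.1 hx.2))) int_logu4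
    rw [hju] at hj
    calc Real.exp (m / 4) ≤ Real.exp (Real.log (∫ x, Real.sqrt (Real.sqrt (p x / p₀ x)) ∂P₀)) :=
          Real.exp_le_exp.2 hj
      _ = _ := Real.exp_log ha0
  have heb : Real.exp (-(m / 4)) ≤ ∫ x, Real.sqrt (Real.sqrt (p₀ x / p x)) ∂P₀ := by
    have hj := aux_jensen int_v4 (fun x => Real.sqrt_nonneg _) (by
      filter_upwards [hpos] with x hx
      exact Real.sqrt_pos.2 (Real.sqrt_pos.2 (div_pos hx.2 hx.1))) int_logv4
    rw [hjv] at hj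
    calc Real.exp (-(m / 4)) ≤ Real.exp (Real.log (∫ x, Real.sqrt (Real.sqrt (p₀ x / p x)) ∂P₀)) :=
          Real.exp_le_exp.2 hj
      _ = _ := Real.exp_log hb0
  -- step 1: ∫ F ≤ a*b - 1
  have hIF1 : (∫ x, (Real.exp |1 / 4 * (Real.log (p x / p₀ x) - m)| - 1 -
        |1 / 4 * (Real.log (p x / p₀ x) - m)|) ∂P₀)
      ≤ (∫ x, Real.sqrt (Real.sqrt (p x / p₀ x)) ∂P₀) *
        (∫ x, Real.sqrt (Real.sqrt (p₀ x / p x)) ∂P₀) - 1 := by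
    have imid : Integrable (fun x => Real.exp (1 / 4 * (Real.log (p x / p₀ x) - m)) +
        Real.exp (-(1 / 4 * (Real.log (p x / p₀ x) - m))) - 2) P₀ := by
      exact (int_ef.add int_emf).sub (integrable_const 2)
    have step := integral_mono_ae int_F imid
      (Filter.Eventually.of_forall fun x => aux_phi_abs_le (1 / 4 * (Real.log (p x / p₀ x) - m)))
    have imid2 : Integrable (fun x => Real.exp (1 / 4 * (Real.log (p x / p₀ x) - m)) +
        Real.exp (-(1 / 4 * (Real.log (p x / p₀ x) - m)))) P₀ := by exact int_ef.add int_emf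
    rw [integral_sub imid2 (integrable_const 2), integral_add int_ef int_emf,
      integral_congr_ae ef_eq, integral_congr_ae emf_eq, integral_mul_const,
      integral_mul_const, integral_const] at step
    simp only [measureReal_def, measure_univ, ENNReal.toReal_one, smul_eq_mul, one_mul] at step
    have hconv : (∫ x, Real.sqrt (Real.sqrt (p x / p₀ x)) ∂P₀) * (Real.exp (m / 4))⁻¹ +
        (∫ x, Real.sqrt (Real.sqrt (p₀ x / p x)) ∂P₀) * Real.exp (m / 4)
        ≤ 1 + (∫ x, Real.sqrt (Real.sqrt (p x / p₀ x)) ∂P₀) *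
          (∫ x, Real.sqrt (Real.sqrt (p₀ x / p x)) ∂P₀) := by
      refine aux_conv_bound (Real.exp_pos _) hea ?_
      have h1 : Real.exp (-(m / 4)) * Real.exp (m / 4) = 1 := by
        rw [← Real.exp_add]; simp
      have h2 := mul_le_mul_of_nonneg_right heb (Real.exp_pos (m / 4)).le
      rw [h1] at h2
      exact h2
    have hexpneg : Real.exp (-(m / 4)) = (Real.exp (m / 4))⁻¹ := Real.exp_neg _
    rw [hexpneg] at step
    linarith only [hconv, step]
  -- step 2 : Cauchy-Schwarz
  have hq_eq : ∫ x, (Real.sqrt (Real.sqrt (p x / p₀ x)) + Real.sqrt (Real.sqrt (p₀ x / p x))) / 2 ∂P₀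
      = ((∫ x, Real.sqrt (Real.sqrt (p x / p₀ x)) ∂P₀) +
         (∫ x, Real.sqrt (Real.sqrt (p₀ x / p x)) ∂P₀)) / 2 := by
    rw [integral_div, integral_add int_u4 int_v4]
  have hcs : (∫ x, (Real.sqrt (Real.sqrt (p x / p₀ x)) + Real.sqrt (Real.sqrt (p₀ x / p x))) / 2 ∂P₀) ^ 2
      ≤ ∫ x, ((Real.sqrt (Real.sqrt (p x / p₀ x)) + Real.sqrt (Real.sqrt (p₀ x / p x))) / 2) ^ 2 ∂P₀ := by
    set r := ∫ x, (Real.sqrt (Real.sqrt (p x / p₀ x)) + Real.sqrt (Real.sqrt (p₀ x / p x))) / 2 ∂P₀ with hrdef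
    have hnn : 0 ≤ ∫ x, (((Real.sqrt (Real.sqrt (p x / p₀ x)) + Real.sqrt (Real.sqrt (p₀ x / p x))) / 2 - r)) ^ 2 ∂P₀ :=
      integral_nonneg fun x => sq_nonneg _
    have hexpand : (fun x => (((Real.sqrt (Real.sqrt (p x / p₀ x)) + Real.sqrt (Real.sqrt (p₀ x / p x))) / 2 - r)) ^ 2)
        = (fun x => (((Real.sqrt (Real.sqrt (p x / p₀ x)) + Real.sqrt (Real.sqrt (p₀ x / p x))) / 2) ^ 2 -
            (2 * r) * ((Real.sqrt (Real.sqrt (p x / p₀ x)) + Real.sqrt (Real.sqrt (p₀ x / p x))) / 2)) + r ^ 2) := by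
      funext x; ring
    have i1 : Integrable (fun x => (((Real.sqrt (Real.sqrt (p x / p₀ x)) + Real.sqrt (Real.sqrt (p₀ x / p x))) / 2) ^ 2 -
        (2 * r) * ((Real.sqrt (Real.sqrt (p x / p₀ x)) + Real.sqrt (Real.sqrt (p₀ x / p x))) / 2))) P₀ := by
      exact int_q2.sub (int_q.const_mul (2 * r))
    rw [hexpand, integral_add i1 (integrable_const _),
      integral_sub int_q2 (int_q.const_mul (2 * r)), integral_const_mul, integral_const] at hnn
    simp only [measureReal_def, measure_univ, ENNReal.toReal_one, smul_eq_mul, one_mul] at hnn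
    rw [← hrdef] at hnn
    linarith only [hnn]
  have hq2_eq : ∫ x, ((Real.sqrt (Real.sqrt (p x / p₀ x)) + Real.sqrt (Real.sqrt (p₀ x / p x))) / 2) ^ 2 ∂P₀
      = 1 + (∫ x, (Real.sqrt (p x / p₀ x) + Real.sqrt (p₀ x / p x) - 2) ∂P₀) / 4 := by
    have hq2ae : (fun x => ((Real.sqrt (Real.sqrt (p x / p₀ x)) + Real.sqrt (Real.sqrt (p₀ x / p x))) / 2) ^ 2)
        =ᵐ[P₀] (fun x => (Real.sqrt (p x / p₀ x) + Real.sqrt (p₀ x / p x) - 2 + 4) / 4) := by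
      filter_upwards [hpos] with x hx
      have hux : 0 < p x / p₀ x := div_pos hx.1 hx.2
      have hvx : 0 < p₀ x / p x := div_pos hx.2 hx.1
      have huv : (p x / p₀ x) * (p₀ x / p x) = 1 := by
        rw [div_mul_div_comm, mul_comm (p x) (p₀ x)]
        exact div_self (ne_of_gt (mul_pos hx.2 hx.1))
      have h1 : Real.sqrt (Real.sqrt (p x / p₀ x)) * Real.sqrt (Real.sqrt (p₀ x / p x)) = 1 := by
        rw [← Real.sqrt_mul (Real.sqrt_nonneg _), ← Real.sqrt_mul (hunn x), huv, Real.sqrt_one, Real.sqrt_one]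
      have h2 : (Real.sqrt (Real.sqrt (p x / p₀ x))) ^ 2 = Real.sqrt (p x / p₀ x) :=
        Real.sq_sqrt (Real.sqrt_nonneg _)
      have h3 : (Real.sqrt (Real.sqrt (p₀ x / p x))) ^ 2 = Real.sqrt (p₀ x / p x) :=
        Real.sq_sqrt (Real.sqrt_nonneg _)
      have hexp : ((Real.sqrt (Real.sqrt (p x / p₀ x)) + Real.sqrt (Real.sqrt (p₀ x / p x))) / 2) ^ 2
          = ((Real.sqrt (Real.sqrt (p x / p₀ x))) ^ 2 + (Real.sqrt (Real.sqrt (p₀ x / p x))) ^ 2 +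
            2 * (Real.sqrt (Real.sqrt (p x / p₀ x)) * Real.sqrt (Real.sqrt (p₀ x / p x)))) / 4 := by ring
      rw [hexp, h1, h2, h3]; ring
    have ig4 : Integrable (fun x => Real.sqrt (p x / p₀ x) + Real.sqrt (p₀ x / p x) - 2 + 4) P₀ := by
      exact int_g.add (integrable_const 4)
    rw [integral_congr_ae hq2ae, integral_div, integral_add int_g (integrable_const 4), integral_const]
    simp only [measureReal_def, measure_univ, ENNReal.toReal_one, smul_eq_mul, one_mul]
    ring
  have hab2 : (∫ x, Real.sqrt (Real.sqrt (p x / p₀ x)) ∂P₀) *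
      (∫ x, Real.sqrt (Real.sqrt (p₀ x / p x)) ∂P₀) - 1
      ≤ (∫ x, (Real.sqrt (p x / p₀ x) + Real.sqrt (p₀ x / p x) - 2) ∂P₀) / 4 := by
    have h1 : (∫ x, Real.sqrt (Real.sqrt (p x / p₀ x)) ∂P₀) *
        (∫ x, Real.sqrt (Real.sqrt (p₀ x / p x)) ∂P₀)
        ≤ (((∫ x, Real.sqrt (Real.sqrt (p x / p₀ x)) ∂P₀) +
           (∫ x, Real.sqrt (Real.sqrt (p₀ x / p x)) ∂P₀)) / 2) ^ 2 := by
      nlinarith [sq_nonneg ((∫ x, Real.sqrt (Real.sqrt (p x / p₀ x)) ∂P₀) -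
        (∫ x, Real.sqrt (Real.sqrt (p₀ x / p x)) ∂P₀))]
    rw [← hq_eq] at h1
    rw [hq2_eq] at hcs
    linarith only [hcs, h1]
  
  -- comparison of Hellinger-type integrals
  have int_p : Integrable p μ := by
    refine ⟨hp.aestronglyMeasurable, ?_⟩
    rw [hasFiniteIntegral_iff_ofReal (Filter.Eventually.of_forall hpnn), hpden]
    exact ENNReal.one_lt_top
  have int_p0 : Integrable p₀ μ := by
    refine ⟨hp₀.aestronglyMeasurable, ?_⟩
    rw [hasFiniteIntegral_iff_ofReal (Filter.Eventually.of_forall hp₀nn), hp₀den]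
    exact ENNReal.one_lt_top
  have int_hell : Integrable (fun x => (Real.sqrt (p x) - Real.sqrt (p₀ x)) ^ 2) μ := by
    have imaj : Integrable (fun x => 2 * (p x + p₀ x)) μ := by
      exact (int_p.add int_p0).const_mul 2
    refine imaj.mono' ((hp.sqrt.sub hp₀.sqrt).pow_const 2).aestronglyMeasurable
      (Filter.Eventually.of_forall fun x => ?_)
    rw [Real.norm_eq_abs, abs_of_nonneg (sq_nonneg _)]
    nlinarith [Real.sq_sqrt (hpnn x), Real.sq_sqrt (hp₀nn x),
      sq_nonneg (Real.sqrt (p x) + Real.sqrt (p₀ x))]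
  have halpha : (∫ x, (1 - Real.sqrt (p x / p₀ x)) ^ 2 ∂P₀) ≤ ∫ x, (Real.sqrt (p x) - Real.sqrt (p₀ x)) ^ 2 ∂μ := by
    have hl1 := ofReal_integral_eq_lintegral_ofReal int_w1
      (Filter.Eventually.of_forall fun x => sq_nonneg ((1 : ℝ) - Real.sqrt (p x / p₀ x)))
    have hl2 := ofReal_integral_eq_lintegral_ofReal int_hell
      (Filter.Eventually.of_forall fun x => sq_nonneg (Real.sqrt (p x) - Real.sqrt (p₀ x)))
    have hl3 : (∫⁻ x, ENNReal.ofReal ((1 - Real.sqrt (p x / p₀ x)) ^ 2) ∂P₀)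
        ≤ ∫⁻ x, ENNReal.ofReal ((Real.sqrt (p x) - Real.sqrt (p₀ x)) ^ 2) ∂μ := by
      rw [hP₀, lintegral_withDensity_eq_lintegral_mul μ hp₀.ennreal_ofReal hmw1.ennreal_ofReal]
      refine lintegral_mono fun x => ?_
      simp only [Pi.mul_apply]
      rcases (hp₀nn x).eq_or_lt with h0 | h0
      · simp [← h0]
      · rw [← ENNReal.ofReal_mul (hp₀nn x)]
        apply ENNReal.ofReal_le_ofReal
        have hsq : Real.sqrt (p x / p₀ x) = Real.sqrt (p x) / Real.sqrt (p₀ x) :=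
          Real.sqrt_div (hpnn x) _
        have ht : 0 < Real.sqrt (p₀ x) := Real.sqrt_pos.2 h0
        have ht2 : (Real.sqrt (p₀ x)) ^ 2 = p₀ x := Real.sq_sqrt (hp₀nn x)
        have key : p₀ x * (1 - Real.sqrt (p x / p₀ x)) ^ 2
            = (Real.sqrt (p x) - Real.sqrt (p₀ x)) ^ 2 := by
          rw [hsq, ← ht2]
          field_simp
          rw [Real.sqrt_sq ht.le]
          ring
        rw [key]
    rw [← hl1, ← hl2] at hl3
    exact (ENNReal.ofReal_le_ofReal_iff (integral_nonneg fun x =>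
      sq_nonneg (Real.sqrt (p x) - Real.sqrt (p₀ x)))).1 hl3
  -- sets
  set A : Set X := {x | (1 + 1 / (2 * c)) ^ 2 ≤ p₀ x / p x} with hA
  have hmA : MeasurableSet A := by
    rw [hA]; exact measurableSet_le measurable_const hmv
  set A1 : Set X := A ∩ {x | p₀ x / p x ≤ (2 + M) ^ 2} with hA1
  set A2 : Set X := A ∩ {x | (2 + M) ^ 2 < p₀ x / p x} with hA2
  have hmA1 : MeasurableSet A1 := hmA.inter (measurableSet_le hmv measurable_const)
  have hmA2 : MeasurableSet A2 := hmA.inter (measurableSet_lt measurable_const hmv)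
  have hcover : A1 ∪ A2 = A := by
    rw [hA1, hA2]
    ext x
    constructor
    · rintro (h | h) <;> exact h.1
    · intro hx
      rcases le_or_gt (p₀ x / p x) ((2 + M) ^ 2) with h | h
      · exact Or.inl ⟨hx, h⟩
      · exact Or.inr ⟨hx, h⟩
  have hdisj : Disjoint A1 A2 := by
    rw [Set.disjoint_left]
    rintro x hx1 hx2
    rw [hA1] at hx1; rw [hA2] at hx2
    have h1 : p₀ x / p x ≤ (2 + M) ^ 2 := hx1.2
    have h2 : (2 + M) ^ 2 < p₀ x / p x := hx2.2
    exact absurd h1 (not_le.2 h2)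
  have hsplitA : ∀ h : X → ℝ, Integrable h P₀ →
      ∫ x in A, h x ∂P₀ = (∫ x in A1, h x ∂P₀) + (∫ x in A2, h x ∂P₀) := by
    intro h ih
    rw [← hcover, setIntegral_union hdisj hmA2 ih.integrableOn ih.integrableOn]
  have hsplit : ∀ h : X → ℝ, Integrable h P₀ →
      ∫ x, h x ∂P₀ = ((∫ x in A1, h x ∂P₀) + (∫ x in A2, h x ∂P₀)) + (∫ x in Aᶜ, h x ∂P₀) := by
    intro h ih
    rw [← integral_add_compl hmA ih, hsplitA h ih]
  -- nonnegativity of pieces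
  have hI0 : 0 ≤ ∫ x in Aᶜ, (1 - Real.sqrt (p x / p₀ x)) ^ 2 ∂P₀ :=
    integral_nonneg fun x => sq_nonneg _
  have hI1 : 0 ≤ ∫ x in A1, (1 - Real.sqrt (p x / p₀ x)) ^ 2 ∂P₀ :=
    integral_nonneg fun x => sq_nonneg _
  have hI2s : 0 ≤ ∫ x in A2, (1 - Real.sqrt (p x / p₀ x)) ^ 2 ∂P₀ :=
    integral_nonneg fun x => sq_nonneg _
  -- pointwise set bounds
  have hB0 : (∫ x in Aᶜ, (Real.sqrt (p x / p₀ x) + Real.sqrt (p₀ x / p x) - 2) ∂P₀)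
      ≤ (3 / 2) * ∫ x in Aᶜ, (1 - Real.sqrt (p x / p₀ x)) ^ 2 ∂P₀ := by
    rw [← integral_const_mul]
    refine integral_mono_ae int_g.integrableOn ((int_w1.const_mul (3 / 2)).integrableOn) ?_
    filter_upwards [ae_restrict_of_ae hpos, ae_restrict_mem hmA.compl] with x hx hxA
    have hxA' : p₀ x / p x < (1 + 1 / (2 * c)) ^ 2 := by
      rw [hA] at hxA
      simp only [Set.mem_compl_iff, Set.mem_setOf_eq] at hxA
      exact not_le.1 hxA
    have hsv : Real.sqrt (p₀ x / p x) ≤ 3 / 2 := by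
      have h1 : Real.sqrt (p₀ x / p x) ≤ Real.sqrt ((1 + 1 / (2 * c)) ^ 2) :=
        Real.sqrt_le_sqrt hxA'.le
      rw [Real.sqrt_sq (by positivity)] at h1
      have h2 : 1 / (2 * c) ≤ 1 / 2 := by
        rw [div_le_div_iff₀ (by positivity) (by norm_num)]; linarith only [hc]
      linarith only [h1, h2]
    exact aux_pt_upper hx.1 hx.2 hsv
  have hB1 : (∫ x in A1, (Real.sqrt (p x / p₀ x) + Real.sqrt (p₀ x / p x) - 2) ∂P₀)
      ≤ (2 + M) * ∫ x in A1, (1 - Real.sqrt (p x / p₀ x)) ^ 2 ∂P₀ := by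
    rw [← integral_const_mul]
    refine integral_mono_ae int_g.integrableOn ((int_w1.const_mul (2 + M)).integrableOn) ?_
    filter_upwards [ae_restrict_of_ae hpos, ae_restrict_mem hmA1] with x hx hxA
    rw [hA1] at hxA
    have h2 : p₀ x / p x ≤ (2 + M) ^ 2 := hxA.2
    have hsv : Real.sqrt (p₀ x / p x) ≤ 2 + M := by
      have h1 : Real.sqrt (p₀ x / p x) ≤ Real.sqrt ((2 + M) ^ 2) := Real.sqrt_le_sqrt h2
      rwa [Real.sqrt_sq hθ0.le] at h1
    exact aux_pt_upper hx.1 hx.2 hsv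
  have hB2 : (2 + M) * (∫ x in A2, (Real.sqrt (p x / p₀ x) + Real.sqrt (p₀ x / p x) - 2) ∂P₀)
      ≤ ∫ x in A2, p₀ x / p x ∂P₀ := by
    rw [← integral_const_mul]
    refine integral_mono_ae ((int_g.const_mul (2 + M)).integrableOn) int_v.integrableOn ?_
    filter_upwards [ae_restrict_of_ae hpos, ae_restrict_mem hmA2] with x hx hxA
    rw [hA2] at hxA
    have h2 : (2 + M) ^ 2 < p₀ x / p x := hxA.2
    exact aux_pt_A2 hx.1 hx.2 (by linarith only [hM]) h2.le
  have hCheb1 : (P₀ A1).toReal ≤ (2 * c + 1) ^ 2 * ∫ x in A1, (1 - Real.sqrt (p x / p₀ x)) ^ 2 ∂P₀ := by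
    have h1 : (∫ x in A1, (1 : ℝ) ∂P₀)
        ≤ ∫ x in A1, (2 * c + 1) ^ 2 * (1 - Real.sqrt (p x / p₀ x)) ^ 2 ∂P₀ := by
      refine integral_mono_ae (integrable_const 1).integrableOn
        ((int_w1.const_mul _).integrableOn) ?_
      filter_upwards [ae_restrict_of_ae hpos, ae_restrict_mem hmA1] with x hx hxA
      rw [hA1] at hxA
      have h2 : (1 + 1 / (2 * c)) ^ 2 ≤ p₀ x / p x := hxA.1
      exact aux_pt_cheb hx.1 hx.2 hc h2
    rw [integral_const_mul, setIntegral_const, measureReal_def, smul_eq_mul, mul_one] at h1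
    exact h1
  have hJ1 : (1 + 1 / (2 * c)) ^ 2 * (P₀ A1).toReal ≤ ∫ x in A1, p₀ x / p x ∂P₀ := by
    have h1 : (∫ x in A1, ((1 + 1 / (2 * c)) ^ 2 : ℝ) ∂P₀) ≤ ∫ x in A1, p₀ x / p x ∂P₀ := by
      refine integral_mono_ae (integrable_const _).integrableOn int_v.integrableOn ?_
      filter_upwards [ae_restrict_mem hmA1] with x hxA
      rw [hA1] at hxA
      exact hxA.1
    rw [setIntegral_const, measureReal_def, smul_eq_mul] at h1
    linarith only [h1]
  have hCheb2 : (1 + M) ^ 2 * (P₀ A2).toReal ≤ (2 + M) ^ 2 * ∫ x in A2, (1 - Real.sqrt (p x / p₀ x)) ^ 2 ∂P₀ := by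
    have h1 : (∫ x in A2, ((1 + M) ^ 2 : ℝ) ∂P₀)
        ≤ ∫ x in A2, (2 + M) ^ 2 * (1 - Real.sqrt (p x / p₀ x)) ^ 2 ∂P₀ := by
      refine integral_mono_ae (integrable_const _).integrableOn
        ((int_w1.const_mul _).integrableOn) ?_
      filter_upwards [ae_restrict_of_ae hpos, ae_restrict_mem hmA2] with x hx hxA
      rw [hA2] at hxA
      have h2 : (2 + M) ^ 2 < p₀ x / p x := hxA.2
      exact aux_pt_cheb2 hx.1 hx.2 hM h2.le
    rw [integral_const_mul, setIntegral_const, measureReal_def, smul_eq_mul] at h1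
    linarith only [h1]
  -- the core estimate
  have core : (∫ x, (Real.sqrt (p x / p₀ x) + Real.sqrt (p₀ x / p x) - 2) ∂P₀) ≤ (4 + 2 * M) * ∫ x, (1 - Real.sqrt (p x / p₀ x)) ^ 2 ∂P₀ := by
    rw [hsplit _ int_g, hsplit _ int_w1]
    rcases eq_or_ne (P₀ A) 0 with hA0 | hA0
    · have hA10 : P₀ A1 = 0 :=
        measure_mono_null (by rw [hA1]; exact Set.inter_subset_left) hA0
      have hA20 : P₀ A2 = 0 :=
        measure_mono_null (by rw [hA2]; exact Set.inter_subset_left) hA0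
      have hr1 : P₀.restrict A1 = 0 := Measure.restrict_eq_zero.2 hA10
      have hr2 : P₀.restrict A2 = 0 := Measure.restrict_eq_zero.2 hA20
      rw [hr1, hr2]
      simp only [integral_zero_measure]
      have hMI0 := mul_nonneg hM hI0
      linarith only [hB0, hI0, hM, hMI0]
    · rcases hMc with h0 | hineq
      · exact absurd h0 hA0
      have hPAne : P₀ A ≠ ⊤ := measure_ne_top _ _
      have hJAeq : (∫⁻ x in A, ENNReal.ofReal (p₀ x / p x) ∂P₀)
          = ENNReal.ofReal (∫ x in A, p₀ x / p x ∂P₀) :=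
        (ofReal_integral_eq_lintegral_ofReal int_v.integrableOn
          (Filter.Eventually.of_forall hvnn)).symm
      rw [hJAeq, ← ENNReal.ofReal_mul hc0.le,
        show P₀ A = ENNReal.ofReal (P₀ A).toReal from (ENNReal.ofReal_toReal hPAne).symm,
        ← ENNReal.ofReal_mul hM] at hineq
      have hhyp : c * (∫ x in A, p₀ x / p x ∂P₀) ≤ M * (P₀ A).toReal :=
        (ENNReal.ofReal_le_ofReal_iff (mul_nonneg hM ENNReal.toReal_nonneg)).1 hineq
      have hPAsplit : (P₀ A).toReal = (P₀ A1).toReal + (P₀ A2).toReal := by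
        rw [← hcover, measure_union hdisj hmA2,
          ENNReal.toReal_add (measure_ne_top _ _) (measure_ne_top _ _)]
      have hJsplit := hsplitA _ int_v
      have hJA : (1 + 1 / (2 * c)) ^ 2 * (P₀ A).toReal ≤ ∫ x in A, p₀ x / p x ∂P₀ := by
        have h1 : (∫ x in A, ((1 + 1 / (2 * c)) ^ 2 : ℝ) ∂P₀) ≤ ∫ x in A, p₀ x / p x ∂P₀ := by
          refine integral_mono_ae (integrable_const _).integrableOn int_v.integrableOn ?_
          filter_upwards [ae_restrict_mem hmA] with x hxA
          rw [hA] at hxA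
          exact hxA
        rw [setIntegral_const, measureReal_def, smul_eq_mul] at h1
        linarith only [h1]
      have hPApos : 0 < (P₀ A).toReal := ENNReal.toReal_pos hA0 hPAne
      have hk : c * (1 + 1 / (2 * c)) ^ 2 ≤ M := by
        have h1 : c * ((1 + 1 / (2 * c)) ^ 2 * (P₀ A).toReal)
            ≤ c * ∫ x in A, p₀ x / p x ∂P₀ := mul_le_mul_of_nonneg_left hJA hc0.le
        have h2 : (c * (1 + 1 / (2 * c)) ^ 2) * (P₀ A).toReal ≤ M * (P₀ A).toReal := by
          linarith only [hhyp, h1]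
        exact le_of_mul_le_mul_right h2 hPApos
      have hS1 := aux_key1 hc hk
      have hS2 := aux_key2 hc hM
      have hd45 : (M - c * (1 + 1 / (2 * c)) ^ 2) * (P₀ A1).toReal
          ≤ (c * (2 + M) ^ 2) * ∫ x in A1, (1 - Real.sqrt (p x / p₀ x)) ^ 2 ∂P₀ := by
        have hd4 : (M - c * (1 + 1 / (2 * c)) ^ 2) * (P₀ A1).toReal
            ≤ (M - c * (1 + 1 / (2 * c)) ^ 2) * ((2 * c + 1) ^ 2 * ∫ x in A1, (1 - Real.sqrt (p x / p₀ x)) ^ 2 ∂P₀) :=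
          mul_le_mul_of_nonneg_left hCheb1 (by linarith only [hk])
        have h' := mul_le_mul_of_nonneg_right hS1 hI1
        linarith only [hd4, h']
      have hd6 : M * (P₀ A2).toReal ≤ c * (4 + 2 * M) * (2 + M) * ∫ x in A2, (1 - Real.sqrt (p x / p₀ x)) ^ 2 ∂P₀ := by
        have e1 : M * ((1 + M) ^ 2 * (P₀ A2).toReal)
            ≤ M * ((2 + M) ^ 2 * ∫ x in A2, (1 - Real.sqrt (p x / p₀ x)) ^ 2 ∂P₀) :=
          mul_le_mul_of_nonneg_left hCheb2 hM
        have e2 := mul_le_mul_of_nonneg_right hS2 hI2s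
        have hM1 : (0:ℝ) < (1 + M) ^ 2 := by positivity
        have e3 : (1 + M) ^ 2 * (M * (P₀ A2).toReal)
            ≤ (1 + M) ^ 2 * (c * (4 + 2 * M) * (2 + M) * ∫ x in A2, (1 - Real.sqrt (p x / p₀ x)) ^ 2 ∂P₀) := by
          linarith only [e1, e2]
        exact le_of_mul_le_mul_left e3 hM1
      have hd1 : c * ((2 + M) * ∫ x in A2, (Real.sqrt (p x / p₀ x) + Real.sqrt (p₀ x / p x) - 2) ∂P₀)
          ≤ c * ∫ x in A2, p₀ x / p x ∂P₀ := mul_le_mul_of_nonneg_left hB2 hc0.le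
      have hJc : c * (∫ x in A, p₀ x / p x ∂P₀)
          = c * (∫ x in A1, p₀ x / p x ∂P₀) + c * (∫ x in A2, p₀ x / p x ∂P₀) := by
        rw [hJsplit]; ring
      have hPc : M * (P₀ A).toReal = M * (P₀ A1).toReal + M * (P₀ A2).toReal := by
        rw [hPAsplit]; ring
      have hJ1c : c * ((1 + 1 / (2 * c)) ^ 2 * (P₀ A1).toReal)
          ≤ c * ∫ x in A1, p₀ x / p x ∂P₀ := mul_le_mul_of_nonneg_left hJ1 hc0.le
      have hG2 : (2 + M) * (∫ x in A2, (Real.sqrt (p x / p₀ x) + Real.sqrt (p₀ x / p x) - 2) ∂P₀)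
          ≤ (2 + M) * ((2 + M) * (∫ x in A1, (1 - Real.sqrt (p x / p₀ x)) ^ 2 ∂P₀)
            + (4 + 2 * M) * ∫ x in A2, (1 - Real.sqrt (p x / p₀ x)) ^ 2 ∂P₀) := by
        have h7 : c * ((2 + M) * ∫ x in A2, (Real.sqrt (p x / p₀ x) + Real.sqrt (p₀ x / p x) - 2) ∂P₀)
            ≤ c * ((2 + M) * ((2 + M) * (∫ x in A1, (1 - Real.sqrt (p x / p₀ x)) ^ 2 ∂P₀)
              + (4 + 2 * M) * ∫ x in A2, (1 - Real.sqrt (p x / p₀ x)) ^ 2 ∂P₀)) := by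
          linarith only [hd1, hJc, hhyp, hPc, hJ1c, hd45, hd6]
        exact le_of_mul_le_mul_left h7 hc0
      have hG2' : (∫ x in A2, (Real.sqrt (p x / p₀ x) + Real.sqrt (p₀ x / p x) - 2) ∂P₀)
          ≤ (2 + M) * (∫ x in A1, (1 - Real.sqrt (p x / p₀ x)) ^ 2 ∂P₀) + (4 + 2 * M) * ∫ x in A2, (1 - Real.sqrt (p x / p₀ x)) ^ 2 ∂P₀ :=
        le_of_mul_le_mul_left hG2 hθ0
      have hMI0 := mul_nonneg hM hI0
      linarith only [hB0, hB1, hG2', hI0, hI1, hI2s, hM, hMI0]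
  -- conclusion, real form
  have main_real : 2 * (∫ x, (Real.exp |1 / 4 * (Real.log (p x / p₀ x) - m)| - 1 -
        |1 / 4 * (Real.log (p x / p₀ x) - m)|) ∂P₀)
      ≤ (2 + M) * ∫ x, (Real.sqrt (p x) - Real.sqrt (p₀ x)) ^ 2 ∂μ := by
    have h3 := mul_le_mul_of_nonneg_left halpha hθ0.le
    linarith only [hIF1, hab2, core, h3]
  have hFnn : 0 ≤ᵐ[P₀] fun x => Real.exp |1 / 4 * (Real.log (p x / p₀ x) - m)| - 1 -
      |1 / 4 * (Real.log (p x / p₀ x) - m)| :=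
    Filter.Eventually.of_forall fun x => by
      simp only [Pi.zero_apply]
      nlinarith [Real.add_one_le_exp (|1 / 4 * (Real.log (p x / p₀ x) - m)|)]
  rw [← ofReal_integral_eq_lintegral_ofReal int_F hFnn,
    ← ofReal_integral_eq_lintegral_ofReal int_hell (Filter.Eventually.of_forall fun x =>
      sq_nonneg (Real.sqrt (p x) - Real.sqrt (p₀ x))),
    ← ENNReal.ofReal_mul hθ0.le,
    show (2:ℝ≥0∞) = ENNReal.ofReal 2 by simp,
    ← ENNReal.ofReal_mul (by norm_num : (0:ℝ) ≤ 2)]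
  exact ENNReal.ofReal_le_ofReal main_real
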